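/- Let 𝒞 be the generalized graph code on K_{3,3,3} with the even-weight code of length 6 at every vertex. If c ∈ 𝒞 is a nonzero codeword, then wt(c) ≥ 3; moreover, the indicator function of the edges of any triangle with one vertex in each part is a codeword of weight exactly 3. -/

import Mathlib

def Hgraph : SimpleGraph (Fin 3 × Fin 3) where
  Adj u v := u.1 ≠ v.1
  symm := by constructor; intro u v h; exact h.symm
  loopless := by constructor; intro u h; exact h rfl

instance : DecidableRel Hgraph.Adj := fun u v => inferInstanceAs (Decidable (u.1 ≠ v.1))

lemma edge_eq (G : SimpleGraph (Fin 3 × Fin 3)) [DecidableRel G.Adj]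
    (hG : ∀ u v, G.Adj u v ↔ u.1 ≠ v.1) : G.edgeFinset = Hgraph.edgeFinset := by
  ext e
  induction e using Sym2.ind with
  | _ a b => simp only [SimpleGraph.mem_edgeFinset, SimpleGraph.mem_edgeSet, hG]; rfl

lemma part2dec : ∀ (b : Fin 3 → Fin 3) (v : Fin 3 × Fin 3),
    (Hgraph.edgeFinset.filter (fun e => v ∈ e ∧ e ∈
      ({s(((0:Fin 3), b 0),((1:Fin 3), b 1)), s(((0:Fin 3), b 0),((2:Fin 3), b 2)),
        s(((1:Fin 3), b 1),((2:Fin 3), b 2))} : Finset (Sym2 (Fin 3 × Fin 3))))).card % 2 = 0 ∧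
    (Hgraph.edgeFinset.filter (fun e => e ∈
      ({s(((0:Fin 3), b 0),((1:Fin 3), b 1)), s(((0:Fin 3), b 0),((2:Fin 3), b 2)),
        s(((1:Fin 3), b 1),((2:Fin 3), b 2))} : Finset (Sym2 (Fin 3 × Fin 3))))).card = 3 := by
  decide

lemma part1 {V : Type*} [Fintype V] [DecidableEq V] (G : SimpleGraph V) [DecidableRel G.Adj]
    (c : Sym2 V → ZMod 2)
    (h1 : ∀ v, (G.edgeFinset.filter (fun e => v ∈ e ∧ c e ≠ 0)).card % 2 = 0)
    (h2 : ∃ e ∈ G.edgeFinset, c e ≠ 0) :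
    3 ≤ (G.edgeFinset.filter (fun e => c e ≠ 0)).card := by
  obtain ⟨e, heE, hce⟩ := h2
  induction e using Sym2.ind with
  | _ a b =>
  have hab : a ≠ b := (G.mem_edgeSet.mp (SimpleGraph.mem_edgeFinset.mp heE)).ne
  set S := G.edgeFinset.filter (fun e => c e ≠ 0) with hS
  have heS : s(a,b) ∈ S := Finset.mem_filter.mpr ⟨heE, hce⟩
  have key : ∀ v, v ∈ s(a,b) → ∃ f ∈ S, f ≠ s(a,b) ∧ v ∈ f := by
    intro v hv
    have hfilt : S.filter (fun e => v ∈ e)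
        = G.edgeFinset.filter (fun e => v ∈ e ∧ c e ≠ 0) := by
      rw [hS, Finset.filter_filter]
      exact Finset.filter_congr (fun e _ => by tauto)
    have hT : (S.filter (fun e => v ∈ e)).card % 2 = 0 := by rw [hfilt]; exact h1 v
    have hvT : s(a,b) ∈ S.filter (fun e => v ∈ e) := Finset.mem_filter.mpr ⟨heS, hv⟩
    have h1le : 1 ≤ (S.filter (fun e => v ∈ e)).card := Finset.card_pos.mpr ⟨_, hvT⟩
    have h2le : 1 < (S.filter (fun e => v ∈ e)).card := by omega
    obtain ⟨f, hf, hfe⟩ := Finset.exists_mem_ne h2le s(a,b)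
    exact ⟨f, (Finset.mem_filter.mp hf).1, hfe, (Finset.mem_filter.mp hf).2⟩
  obtain ⟨f, hfS, hfe, haf⟩ := key a (Sym2.mem_mk_left a b)
  obtain ⟨g, hgS, hge, hbg⟩ := key b (Sym2.mem_mk_right a b)
  have hfg : f ≠ g := by
    rintro rfl
    exact hfe ((Sym2.mem_and_mem_iff hab).mp ⟨haf, hbg⟩)
  have hsub : ({s(a,b), f, g} : Finset (Sym2 V)) ⊆ S := by
    intro x hx
    simp only [Finset.mem_insert, Finset.mem_singleton] at hx
    rcases hx with rfl | rfl | rfl <;> assumption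
  have hcard : ({s(a,b), f, g} : Finset (Sym2 V)).card = 3 := by
    rw [Finset.card_insert_of_notMem (by simp only [Finset.mem_insert, Finset.mem_singleton]; push_neg; exact ⟨Ne.symm hfe, Ne.symm hge⟩),
      Finset.card_insert_of_notMem (by simpa using hfg), Finset.card_singleton]
  calc 3 = ({s(a,b), f, g} : Finset (Sym2 V)).card := hcard.symm
    _ ≤ S.card := Finset.card_le_card hsub

theorem stmt16 (G : SimpleGraph (Fin 3 × Fin 3)) [DecidableRel G.Adj]
    (hG : ∀ u v, G.Adj u v ↔ u.1 ≠ v.1) :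
    (∀ c : Sym2 (Fin 3 × Fin 3) → ZMod 2,
      (∀ v, (G.edgeFinset.filter (fun e => v ∈ e ∧ c e ≠ 0)).card % 2 = 0) →
      (∃ e ∈ G.edgeFinset, c e ≠ 0) →
      3 ≤ (G.edgeFinset.filter (fun e => c e ≠ 0)).card) ∧
    (∀ w : Fin 3 → Fin 3 × Fin 3, (∀ j, (w j).1 = j) →
      ∀ c : Sym2 (Fin 3 × Fin 3) → ZMod 2,
        (∀ e, c e = if e ∈ ({s(w 0, w 1), s(w 0, w 2), s(w 1, w 2)} :
            Finset (Sym2 (Fin 3 × Fin 3))) then 1 else 0) →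
        (∀ v, (G.edgeFinset.filter (fun e => v ∈ e ∧ c e ≠ 0)).card % 2 = 0) ∧
        (G.edgeFinset.filter (fun e => c e ≠ 0)).card = 3) := by
  constructor
  · exact fun c h1 h2 => part1 G c h1 h2
  · intro w hw c hc
    have hb : ∀ j : Fin 3, w j = (j, (w j).2) := fun j => Prod.ext (hw j) rfl
    have hc' : ∀ e, c e = if e ∈
        ({s(((0:Fin 3), (w 0).2),((1:Fin 3), (w 1).2)),
          s(((0:Fin 3), (w 0).2),((2:Fin 3), (w 2).2)),
          s(((1:Fin 3), (w 1).2),((2:Fin 3), (w 2).2))} : Finset (Sym2 (Fin 3 × Fin 3)))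
        then 1 else 0 := by
      intro e
      rw [hc e, hb 0, hb 1, hb 2]
    rw [edge_eq G hG]
    constructor
    · intro v
      have hfe : Hgraph.edgeFinset.filter (fun e => v ∈ e ∧ c e ≠ 0)
          = Hgraph.edgeFinset.filter (fun e => v ∈ e ∧ e ∈
        ({s(((0:Fin 3), (w 0).2),((1:Fin 3), (w 1).2)),
          s(((0:Fin 3), (w 0).2),((2:Fin 3), (w 2).2)),
          s(((1:Fin 3), (w 1).2),((2:Fin 3), (w 2).2))} : Finset (Sym2 (Fin 3 × Fin 3)))) :=
        Finset.filter_congr (fun e _ => by rw [hc' e]; split_ifs with h <;> simp [h])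
      rw [hfe]
      exact (part2dec (fun j => (w j).2) v).1
    · have hfe : Hgraph.edgeFinset.filter (fun e => c e ≠ 0)
          = Hgraph.edgeFinset.filter (fun e => e ∈
        ({s(((0:Fin 3), (w 0).2),((1:Fin 3), (w 1).2)),
          s(((0:Fin 3), (w 0).2),((2:Fin 3), (w 2).2)),
          s(((1:Fin 3), (w 1).2),((2:Fin 3), (w 2).2))} : Finset (Sym2 (Fin 3 × Fin 3)))) :=
        Finset.filter_congr (fun e _ => by rw [hc' e]; split_ifs with h <;> simp [h])
      rw [hfe]
      exact (part2dec (fun j => (w j).2) 0).2
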